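/- Let 𝒜 = {A₁, A₂, A₃, A₄} be a 4-cover of ℝ. If A₃ is of type F_σ in 𝕊← (a countable union of sets closed in 𝕊←) and A₄ is of type F_σ in 𝕊 (a countable union of sets closed in 𝕊), then the hybrid space H₄(𝒜) is non-archimedeanly quasi-metrizable. -/

import Mathlib

open Set

/-- The Sorgenfrey topology on ℝ (generated by the intervals `[a, b)`). -/
def sorgenfreyTop : TopologicalSpace ℝ :=
  TopologicalSpace.generateFrom {S : Set ℝ | ∃ a b : ℝ, S = Set.Ico a b}

/-- The "left" Sorgenfrey topology on ℝ (generated by the intervals `(a, b]`). -/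
def sorgenfreyLeftTop : TopologicalSpace ℝ :=
  TopologicalSpace.generateFrom {S : Set ℝ | ∃ a b : ℝ, S = Set.Ioc a b}

/-- `A₁, A₂, A₃, A₄` form a 4-cover of ℝ: pairwise disjoint with union ℝ. -/
def Is4Cover (A₁ A₂ A₃ A₄ : Set ℝ) : Prop :=
  A₁ ∪ A₂ ∪ A₃ ∪ A₄ = Set.univ ∧
  Disjoint A₁ A₂ ∧ Disjoint A₁ A₃ ∧ Disjoint A₁ A₄ ∧
  Disjoint A₂ A₃ ∧ Disjoint A₂ A₄ ∧ Disjoint A₃ A₄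

/-- The hybrid topology determined by a 4-cover: points of `A₁` have the usual
open intervals as a local base, points of `A₂` are isolated, points of `A₃`
have a local base of sets `[x, x+ε)`, and points of `A₄` of sets `(x-ε, x]`. -/
def hybridTop (A₁ A₂ A₃ A₄ : Set ℝ) : TopologicalSpace ℝ :=
  TopologicalSpace.generateFrom
    ({S : Set ℝ | ∃ x ∈ A₁, ∃ ε : ℝ, 0 < ε ∧ S = Set.Ioo (x - ε) (x + ε)} ∪
     {S : Set ℝ | ∃ x ∈ A₂, S = {x}} ∪
     {S : Set ℝ | ∃ x ∈ A₃, ∃ ε : ℝ, 0 < ε ∧ S = Set.Ico x (x + ε)} ∪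
     {S : Set ℝ | ∃ x ∈ A₄, ∃ ε : ℝ, 0 < ε ∧ S = Set.Ioc (x - ε) x})

/-- A quasi-metric: nonnegative, vanishing exactly on the diagonal,
satisfying the triangle inequality. -/
def IsQuasiMetric {X : Type*} (ρ : X → X → ℝ) : Prop :=
  (∀ x y, 0 ≤ ρ x y) ∧ (∀ x y, ρ x y = 0 ↔ x = y) ∧
  (∀ x y z, ρ x y ≤ ρ x z + ρ z y)

/-- A non-archimedean quasi-metric. -/
def IsNAQuasiMetric {X : Type*} (ρ : X → X → ℝ) : Prop :=
  IsQuasiMetric ρ ∧ ∀ x y z, ρ x y ≤ max (ρ x z) (ρ z y)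

/-- The topology induced by a quasi-metric: the balls `B_ρ(x, r)` form a base. -/
def quasiMetricTop {X : Type*} (ρ : X → X → ℝ) : TopologicalSpace X :=
  TopologicalSpace.generateFrom
    {B : Set X | ∃ x : X, ∃ r : ℝ, 0 < r ∧ B = {y : X | ρ x y < r}}

/-- A topology is quasi-metrizable if it is induced by some quasi-metric. -/
def QuasiMetrizableTop {X : Type*} (t : TopologicalSpace X) : Prop :=
  ∃ ρ : X → X → ℝ, IsQuasiMetric ρ ∧ t = quasiMetricTop ρ

/-- A topology is non-archimedeanly quasi-metrizable if it is induced by some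
non-archimedean quasi-metric. -/
def NAQuasiMetrizableTop {X : Type*} (t : TopologicalSpace X) : Prop :=
  ∃ ρ : X → X → ℝ, IsNAQuasiMetric ρ ∧ t = quasiMetricTop ρ

namespace HQM4

/-! ### Dyadic grid -/

noncomputable def lg (n : ℕ) (x : ℝ) : ℝ := ((⌈x * 2 ^ n⌉ : ℝ) - 1) / 2 ^ n
noncomputable def rg (n : ℕ) (x : ℝ) : ℝ := ((⌊x * 2 ^ n⌋ : ℝ) + 1) / 2 ^ n

lemma pow2 (n : ℕ) : (0:ℝ) < 2 ^ n := by positivity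

lemma lg_lt (n : ℕ) (x : ℝ) : lg n x < x := by
  rw [lg, div_lt_iff₀ (pow2 n)]
  linarith [Int.ceil_lt_add_one (x * 2 ^ n)]

lemma lt_rg (n : ℕ) (x : ℝ) : x < rg n x := by
  rw [rg, lt_div_iff₀ (pow2 n)]
  linarith [Int.lt_floor_add_one (x * 2 ^ n)]

lemma lg_ge (n : ℕ) (x : ℝ) : x - (2⁻¹:ℝ) ^ n ≤ lg n x := by
  rw [lg, le_div_iff₀ (pow2 n), sub_mul, inv_pow, inv_mul_cancel₀ (ne_of_gt (pow2 n))]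
  linarith [Int.le_ceil (x * 2 ^ n)]

lemma rg_le (n : ℕ) (x : ℝ) : rg n x ≤ x + (2⁻¹:ℝ) ^ n := by
  rw [rg, div_le_iff₀ (pow2 n), add_mul, inv_pow, inv_mul_cancel₀ (ne_of_gt (pow2 n))]
  linarith [Int.floor_le (x * 2 ^ n)]

lemma lg_mono {n : ℕ} {x y : ℝ} (h : lg n x < y) : lg n x ≤ lg n y := by
  rw [lg, div_lt_iff₀ (pow2 n)] at h
  have h2 : (⌈x * 2 ^ n⌉ - 1) + 1 ≤ ⌈y * 2 ^ n⌉ := by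
    rw [Int.add_one_le_iff, Int.lt_ceil]
    push_cast
    linarith
  rw [lg, lg, div_le_div_iff₀ (pow2 n) (pow2 n)]
  have h3 : (⌈x * 2 ^ n⌉ : ℝ) ≤ (⌈y * 2 ^ n⌉ : ℝ) := by exact_mod_cast (by omega : ⌈x * 2 ^ n⌉ ≤ ⌈y * 2 ^ n⌉)
  nlinarith [pow2 n]

lemma rg_mono {n : ℕ} {x y : ℝ} (h : y < rg n x) : rg n y ≤ rg n x := by
  rw [rg, lt_div_iff₀ (pow2 n)] at h
  have h2 : ⌊y * 2 ^ n⌋ < ⌊x * 2 ^ n⌋ + 1 := by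
    rw [Int.floor_lt]
    push_cast
    linarith
  rw [rg, rg, div_le_div_iff₀ (pow2 n) (pow2 n)]
  have h3 : (⌊y * 2 ^ n⌋ : ℝ) ≤ (⌊x * 2 ^ n⌋ : ℝ) := by exact_mod_cast (by omega : ⌊y * 2 ^ n⌋ ≤ ⌊x * 2 ^ n⌋)
  nlinarith [pow2 n]

/-! ### Reachability (transitive closure of a neighbornet) -/

def Reach (W : ℝ → Set ℝ) (x : ℝ) : Set ℝ :=
  ⋂₀ {S : Set ℝ | x ∈ S ∧ ∀ y ∈ S, W y ⊆ S}

lemma mem_reach_self {W : ℝ → Set ℝ} {x : ℝ} : x ∈ Reach W x :=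
  fun _S hS => hS.1

lemma reach_closed {W : ℝ → Set ℝ} {x y : ℝ} (hy : y ∈ Reach W x) : W y ⊆ Reach W x := by
  intro z hz S hS
  exact hS.2 y (hy S hS) hz

lemma reach_min {W : ℝ → Set ℝ} {x : ℝ} {S : Set ℝ} (hx : x ∈ S)
    (hS : ∀ y ∈ S, W y ⊆ S) : Reach W x ⊆ S :=
  fun _z hz => hz S ⟨hx, hS⟩

lemma reach_trans {W : ℝ → Set ℝ} {x y : ℝ} (hy : y ∈ Reach W x) :
    Reach W y ⊆ Reach W x :=
  reach_min hy fun _z hz => reach_closed hz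

/-! ### The basic neighbornet -/

open Classical in
noncomputable def Vn (A₂ A₃ A₄ : Set ℝ) (l r : ℕ → ℝ → ℝ) (n : ℕ) (x : ℝ) : Set ℝ :=
  if x ∈ A₂ then {x}
  else if x ∈ A₃ then Ico x (min (rg n x) (x + r n x))
  else if x ∈ A₄ then Ioc (max (lg n x) (x - l n x)) x
  else Ioo (max (lg n x) (x - l n x)) (min (rg n x) (x + r n x))

variable {A₂ A₃ A₄ : Set ℝ} {F H : ℕ → Set ℝ} {l r : ℕ → ℝ → ℝ} {n : ℕ} {x : ℝ}

lemma V_cell : Vn A₂ A₃ A₄ l r n x ⊆ Ioo (lg n x) (rg n x) := by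
  unfold Vn
  split_ifs with h2 h3 h4
  · exact singleton_subset_iff.mpr ⟨lg_lt n x, lt_rg n x⟩
  · exact fun t ht => ⟨lt_of_lt_of_le (lg_lt n x) ht.1,
      lt_of_lt_of_le ht.2 (min_le_left _ _)⟩
  · exact fun t ht => ⟨lt_of_le_of_lt (le_max_left _ _) ht.1,
      lt_of_le_of_lt ht.2 (lt_rg n x)⟩
  · exact fun t ht => ⟨lt_of_le_of_lt (le_max_left _ _) ht.1,
      lt_of_lt_of_le ht.2 (min_le_left _ _)⟩

lemma reach_cell : Reach (Vn A₂ A₃ A₄ l r n) x ⊆ Ioo (lg n x) (rg n x) := by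
  refine reach_min ⟨lg_lt n x, lt_rg n x⟩ fun y hy => ?_
  exact V_cell.trans (Ioo_subset_Ioo (lg_mono hy.1) (rg_mono hy.2))

lemma reach_small :
    Reach (Vn A₂ A₃ A₄ l r n) x ⊆ Ioo (x - (2⁻¹:ℝ) ^ n) (x + (2⁻¹:ℝ) ^ n) :=
  reach_cell.trans (Ioo_subset_Ioo (lg_ge n x) (rg_le n x))

lemma V_right (h34 : ∀ t, t ∈ A₃ → t ∉ A₄)
    (hrav : ∀ t, t ∉ A₄ → Ico t (t + r n t) ∩ H n = ∅)
    {z : ℝ} (hz : z ∈ H n) (hxz : x ≤ z) :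
    Vn A₂ A₃ A₄ l r n x ⊆ Iic z := by
  unfold Vn
  split_ifs with h2 h3 h4
  · exact singleton_subset_iff.mpr hxz
  · have hx4 : x ∉ A₄ := h34 x h3
    have hb : x + r n x ≤ z := by
      by_contra hlt
      push_neg at hlt
      have hmem : z ∈ Ico x (x + r n x) ∩ H n := ⟨⟨hxz, hlt⟩, hz⟩
      rw [hrav x hx4] at hmem
      exact hmem
    exact fun t ht => le_of_lt (lt_of_lt_of_le ht.2 ((min_le_right _ _).trans hb))
  · exact fun t ht => ht.2.trans hxz
  · have hb : x + r n x ≤ z := by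
      by_contra hlt
      push_neg at hlt
      have hmem : z ∈ Ico x (x + r n x) ∩ H n := ⟨⟨hxz, hlt⟩, hz⟩
      rw [hrav x h4] at hmem
      exact hmem
    exact fun t ht => le_of_lt (lt_of_lt_of_le ht.2 ((min_le_right _ _).trans hb))

lemma V_left (h43 : ∀ t, t ∈ A₄ → t ∉ A₃)
    (hlav : ∀ t, t ∉ A₃ → Ioc (t - l n t) t ∩ F n = ∅)
    {z : ℝ} (hz : z ∈ F n) (hzx : z ≤ x) :
    Vn A₂ A₃ A₄ l r n x ⊆ Ici z := by
  unfold Vn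
  split_ifs with h2 h3 h4
  · exact singleton_subset_iff.mpr hzx
  · exact fun t ht => hzx.trans ht.1
  · have hx3 : x ∉ A₃ := h43 x h4
    have hb : z ≤ x - l n x := by
      by_contra hlt
      push_neg at hlt
      have hmem : z ∈ Ioc (x - l n x) x ∩ F n := ⟨⟨hlt, hzx⟩, hz⟩
      rw [hlav x hx3] at hmem
      exact hmem
    exact fun t ht => le_of_lt (lt_of_le_of_lt (hb.trans (le_max_right _ _)) ht.1)
  · have hb : z ≤ x - l n x := by
      by_contra hlt
      push_neg at hlt
      have hmem : z ∈ Ioc (x - l n x) x ∩ F n := ⟨⟨hlt, hzx⟩, hz⟩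
      rw [hlav x h3] at hmem
      exact hmem
    exact fun t ht => le_of_lt (lt_of_le_of_lt (hb.trans (le_max_right _ _)) ht.1)

lemma reach_right (h34 : ∀ t, t ∈ A₃ → t ∉ A₄)
    (hrav : ∀ t, t ∉ A₄ → Ico t (t + r n t) ∩ H n = ∅)
    (hx : x ∈ H n) : Reach (Vn A₂ A₃ A₄ l r n) x ⊆ Iic x := by
  have key : Reach (Vn A₂ A₃ A₄ l r n) x ⊆ Reach (Vn A₂ A₃ A₄ l r n) x ∩ Iic x := by
    refine reach_min ⟨mem_reach_self, le_refl x⟩ fun y hy => ?_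
    exact subset_inter (reach_closed hy.1) (V_right h34 hrav hx hy.2)
  exact key.trans inter_subset_right

lemma reach_left (h43 : ∀ t, t ∈ A₄ → t ∉ A₃)
    (hlav : ∀ t, t ∉ A₃ → Ioc (t - l n t) t ∩ F n = ∅)
    (hx : x ∈ F n) : Reach (Vn A₂ A₃ A₄ l r n) x ⊆ Ici x := by
  have key : Reach (Vn A₂ A₃ A₄ l r n) x ⊆ Reach (Vn A₂ A₃ A₄ l r n) x ∩ Ici x := by
    refine reach_min ⟨mem_reach_self, le_refl x⟩ fun y hy => ?_
    exact subset_inter (reach_closed hy.1) (V_left h43 hlav hx hy.2)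
  exact key.trans inter_subset_right

lemma V_eq_A2 (h2 : x ∈ A₂) : Vn A₂ A₃ A₄ l r n x = {x} := by
  unfold Vn; rw [if_pos h2]

lemma reach_A2 (h2 : x ∈ A₂) : Reach (Vn A₂ A₃ A₄ l r n) x ⊆ {x} := by
  refine reach_min rfl fun y hy => ?_
  rw [mem_singleton_iff] at hy
  subst hy
  rw [V_eq_A2 h2]

lemma V_sup_A3 (h2 : x ∉ A₂) (h3 : x ∈ A₃) (hr : 0 < r n x) :
    ∃ ε > 0, Ico x (x + ε) ⊆ Vn A₂ A₃ A₄ l r n x := by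
  refine ⟨min (rg n x) (x + r n x) - x, ?_, ?_⟩
  · have := lt_rg n x
    have : x < min (rg n x) (x + r n x) := lt_min (lt_rg n x) (by linarith)
    linarith
  · unfold Vn
    rw [if_neg h2, if_pos h3]
    exact fun t ht => ⟨ht.1, by linarith [ht.2]⟩

lemma V_sup_A4 (h2 : x ∉ A₂) (h3 : x ∉ A₃) (h4 : x ∈ A₄) (hl : 0 < l n x) :
    ∃ ε > 0, Ioc (x - ε) x ⊆ Vn A₂ A₃ A₄ l r n x := by
  refine ⟨x - max (lg n x) (x - l n x), ?_, ?_⟩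
  · have : max (lg n x) (x - l n x) < x := max_lt (lg_lt n x) (by linarith)
    linarith
  · unfold Vn
    rw [if_neg h2, if_neg h3, if_pos h4]
    exact fun t ht => ⟨by linarith [ht.1], ht.2⟩

lemma V_sup_A1 (h2 : x ∉ A₂) (h3 : x ∉ A₃) (h4 : x ∉ A₄) (hl : 0 < l n x) (hr : 0 < r n x) :
    ∃ ε > 0, Ioo (x - ε) (x + ε) ⊆ Vn A₂ A₃ A₄ l r n x := by
  have hmax : max (lg n x) (x - l n x) < x := max_lt (lg_lt n x) (by linarith)
  have hmin : x < min (rg n x) (x + r n x) := lt_min (lt_rg n x) (by linarith)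
  refine ⟨min (x - max (lg n x) (x - l n x)) (min (rg n x) (x + r n x) - x),
    lt_min (by linarith) (by linarith), ?_⟩
  unfold Vn
  rw [if_neg h2, if_neg h3, if_neg h4]
  intro t ht
  constructor
  · have := min_le_left (x - max (lg n x) (x - l n x)) (min (rg n x) (x + r n x) - x)
    linarith [ht.1]
  · have := min_le_right (x - max (lg n x) (x - l n x)) (min (rg n x) (x + r n x) - x)
    linarith [ht.2]

/-! ### The quasi-metric -/

open Classical in
noncomputable def rho (W : ℕ → ℝ → Set ℝ) (x y : ℝ) : ℝ :=
  if h : ∃ n, y ∉ Reach (W n) x then (2⁻¹ : ℝ) ^ Nat.find h else 0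

lemma rho_self {W : ℕ → ℝ → Set ℝ} {x : ℝ} : rho W x x = 0 := by
  classical
  unfold rho
  rw [dif_neg]
  push_neg
  exact fun n => mem_reach_self

lemma rho_nonneg {W : ℕ → ℝ → Set ℝ} {x y : ℝ} : 0 ≤ rho W x y := by
  unfold rho
  split <;> positivity

lemma rho_lt_iff {W : ℕ → ℝ → Set ℝ} {x y : ℝ} {n : ℕ} :
    rho W x y < (2⁻¹:ℝ) ^ n ↔ ∀ m ≤ n, y ∈ Reach (W m) x := by
  classical
  unfold rho
  split_ifs with h
  · rw [pow_lt_pow_iff_right_of_lt_one₀ (by norm_num) (by norm_num), Nat.lt_find_iff h n]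
    simp only [not_not]
  · push_neg at h
    exact iff_of_true (by positivity) fun m _ => h m

lemma rho_na {W : ℕ → ℝ → Set ℝ} (x y z : ℝ) :
    rho W x y ≤ max (rho W x z) (rho W z y) := by
  classical
  by_contra hcon
  push_neg at hcon
  have hex : ∃ n, y ∉ Reach (W n) x := by
    by_contra hc
    push_neg at hc
    have h0 : rho W x y = 0 := by unfold rho; rw [dif_neg (by push_neg; exact hc)]
    have : (0:ℝ) ≤ max (rho W x z) (rho W z y) :=
      le_trans rho_nonneg (le_max_left _ _)
    rw [h0] at hcon
    linarith
  have hval : rho W x y = (2⁻¹:ℝ) ^ Nat.find hex := by unfold rho; rw [dif_pos hex]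
  have hy : y ∉ Reach (W (Nat.find hex)) x := Nat.find_spec hex
  rw [hval] at hcon
  have h1 : rho W x z < (2⁻¹:ℝ) ^ Nat.find hex :=
    lt_of_le_of_lt (le_max_left _ _) hcon
  have h2 : rho W z y < (2⁻¹:ℝ) ^ Nat.find hex :=
    lt_of_le_of_lt (le_max_right _ _) hcon
  have hz' : z ∈ Reach (W (Nat.find hex)) x := rho_lt_iff.mp h1 _ le_rfl
  have hy' : y ∈ Reach (W (Nat.find hex)) z := rho_lt_iff.mp h2 _ le_rfl
  exact hy (reach_trans hz' hy')

/-! ### Generated-topology helpers -/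

lemma generateOpen_of_nbhd {g : Set (Set ℝ)} {U : Set ℝ}
    (h : ∀ x ∈ U, ∃ S ∈ g, x ∈ S ∧ S ⊆ U) :
    TopologicalSpace.GenerateOpen g U := by
  have hU : U = ⋃₀ {S | S ∈ g ∧ S ⊆ U} := by
    apply subset_antisymm
    · intro x hx
      obtain ⟨S, hSg, hxS, hSU⟩ := h x hx
      exact ⟨S, ⟨hSg, hSU⟩, hxS⟩
    · exact sUnion_subset fun S hS => hS.2
  rw [hU]
  exact TopologicalSpace.GenerateOpen.sUnion _ fun S hS =>
    TopologicalSpace.GenerateOpen.basic S hS.1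

lemma isOpen_generateFrom_of_nbhd {g : Set (Set ℝ)} {U : Set ℝ}
    (h : ∀ x ∈ U, ∃ S ∈ g, x ∈ S ∧ S ⊆ U) :
    @IsOpen ℝ (TopologicalSpace.generateFrom g) U :=
  generateOpen_of_nbhd h

lemma sorgR {U : Set ℝ}
    (hU : TopologicalSpace.GenerateOpen {S : Set ℝ | ∃ a b : ℝ, S = Set.Ico a b} U) :
    ∀ x ∈ U, ∃ δ > 0, Set.Ico x (x + δ) ⊆ U := by
  induction hU with
  | basic s hs =>
      obtain ⟨a, b, rfl⟩ := hs
      intro x hx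
      refine ⟨b - x, by linarith [hx.2], fun t ht => ⟨le_trans hx.1 ht.1, by linarith [ht.2]⟩⟩
  | univ => exact fun x _ => ⟨1, one_pos, fun t _ => trivial⟩
  | inter s t hs ht ihs iht =>
      intro x hx
      obtain ⟨δ₁, hδ₁, h₁⟩ := ihs x hx.1
      obtain ⟨δ₂, hδ₂, h₂⟩ := iht x hx.2
      refine ⟨min δ₁ δ₂, lt_min hδ₁ hδ₂, fun u hu => ⟨?_, ?_⟩⟩
      · exact h₁ ⟨hu.1, lt_of_lt_of_le hu.2 (add_le_add_right (min_le_left _ _) _)⟩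
      · exact h₂ ⟨hu.1, lt_of_lt_of_le hu.2 (add_le_add_right (min_le_right _ _) _)⟩
  | sUnion S hS ih =>
      intro x hx
      obtain ⟨u, huS, hxu⟩ := hx
      obtain ⟨δ, hδ, hsub⟩ := ih u huS x hxu
      exact ⟨δ, hδ, fun t ht => ⟨u, huS, hsub ht⟩⟩

lemma sorgL {U : Set ℝ}
    (hU : TopologicalSpace.GenerateOpen {S : Set ℝ | ∃ a b : ℝ, S = Set.Ioc a b} U) :
    ∀ x ∈ U, ∃ δ > 0, Set.Ioc (x - δ) x ⊆ U := by
  induction hU with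
  | basic s hs =>
      obtain ⟨a, b, rfl⟩ := hs
      intro x hx
      refine ⟨x - a, by linarith [hx.1], fun t ht => ⟨by linarith [ht.1], le_trans ht.2 hx.2⟩⟩
  | univ => exact fun x _ => ⟨1, one_pos, fun t _ => trivial⟩
  | inter s t hs ht ihs iht =>
      intro x hx
      obtain ⟨δ₁, hδ₁, h₁⟩ := ihs x hx.1
      obtain ⟨δ₂, hδ₂, h₂⟩ := iht x hx.2
      refine ⟨min δ₁ δ₂, lt_min hδ₁ hδ₂, fun u hu => ⟨?_, ?_⟩⟩
      · refine h₁ ⟨lt_of_le_of_lt ?_ hu.1, hu.2⟩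
        have := min_le_left δ₁ δ₂; linarith
      · refine h₂ ⟨lt_of_le_of_lt ?_ hu.1, hu.2⟩
        have := min_le_right δ₁ δ₂; linarith
  | sUnion S hS ih =>
      intro x hx
      obtain ⟨u, huS, hxu⟩ := hx
      obtain ⟨δ, hδ, hsub⟩ := ih u huS x hxu
      exact ⟨δ, hδ, fun t ht => ⟨u, huS, hsub ht⟩⟩

lemma exists_min_eps (εf : ℕ → ℝ) (hpos : ∀ m, 0 < εf m) (n : ℕ) :
    ∃ ε > 0, ∀ m ≤ n, ε ≤ εf m := by
  refine ⟨(Finset.range (n+1)).inf' (Finset.nonempty_range_iff.mpr n.succ_ne_zero) εf, ?_, ?_⟩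
  · rw [gt_iff_lt, Finset.lt_inf'_iff]
    exact fun i _ => hpos i
  · intro m hm
    exact Finset.inf'_le _ (Finset.mem_range.mpr (Nat.lt_succ_of_le hm))

lemma exists_pow_half_lt {δ : ℝ} (hδ : 0 < δ) : ∃ n : ℕ, (2⁻¹:ℝ) ^ n < δ :=
  exists_pow_lt_of_lt_one hδ (by norm_num)

lemma pow_half_anti {m n : ℕ} (h : m ≤ n) : (2⁻¹:ℝ) ^ n ≤ (2⁻¹:ℝ) ^ m :=
  pow_le_pow_of_le_one (by norm_num) (by norm_num) h

end HQM4


/-- If `A₃` is of type `F_σ` in `𝕊←` and `A₄` is of type `F_σ` in `𝕊`, then the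
hybrid space `H₄(𝒜)` is non-archimedeanly quasi-metrizable. -/
theorem hybrid_naQuasiMetrizable_of_Fsigma
    (A₁ A₂ A₃ A₄ : Set ℝ) (hcov : Is4Cover A₁ A₂ A₃ A₄)
    (hF : ∃ F : ℕ → Set ℝ, (∀ n, @IsClosed ℝ sorgenfreyLeftTop (F n)) ∧ A₃ = ⋃ n, F n)
    (hH : ∃ H : ℕ → Set ℝ, (∀ n, @IsClosed ℝ sorgenfreyTop (H n)) ∧ A₄ = ⋃ n, H n) :
    NAQuasiMetrizableTop (hybridTop A₁ A₂ A₃ A₄) := by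
  classical
  obtain ⟨hcovU, h12, h13, h14, h23, h24, h34⟩ := hcov
  obtain ⟨F₀, hF₀c, hF₀U⟩ := hF
  obtain ⟨H₀, hH₀c, hH₀U⟩ := hH
  have hmem : ∀ x : ℝ, x ∈ A₁ ∨ x ∈ A₂ ∨ x ∈ A₃ ∨ x ∈ A₄ := by
    intro x
    have hx : x ∈ A₁ ∪ A₂ ∪ A₃ ∪ A₄ := by rw [hcovU]; trivial
    simp only [Set.mem_union] at hx
    tauto
  have h34' : ∀ t, t ∈ A₃ → t ∉ A₄ := fun t ht h => (Set.disjoint_left.mp h34) ht h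
  have h43' : ∀ t, t ∈ A₄ → t ∉ A₃ := fun t ht h => (Set.disjoint_left.mp h34) h ht
  -- accumulated (increasing) families
  set F : ℕ → Set ℝ := fun n => ⋃ i ∈ Finset.range (n + 1), F₀ i with hF_def
  set H : ℕ → Set ℝ := fun n => ⋃ i ∈ Finset.range (n + 1), H₀ i with hH_def
  have hFmono : ∀ {m n : ℕ}, m ≤ n → F m ⊆ F n := by
    intro m n hmn t ht
    simp only [hF_def, Set.mem_iUnion, Finset.mem_range] at ht ⊢
    obtain ⟨i, hi, hti⟩ := ht
    exact ⟨i, by omega, hti⟩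
  have hHmono : ∀ {m n : ℕ}, m ≤ n → H m ⊆ H n := by
    intro m n hmn t ht
    simp only [hH_def, Set.mem_iUnion, Finset.mem_range] at ht ⊢
    obtain ⟨i, hi, hti⟩ := ht
    exact ⟨i, by omega, hti⟩
  have hFsub : ∀ n, F n ⊆ A₃ := by
    intro n t ht
    simp only [hF_def, Set.mem_iUnion, Finset.mem_range] at ht
    obtain ⟨i, _, hti⟩ := ht
    rw [hF₀U]
    exact Set.mem_iUnion.mpr ⟨i, hti⟩
  have hHsub : ∀ n, H n ⊆ A₄ := by
    intro n t ht
    simp only [hH_def, Set.mem_iUnion, Finset.mem_range] at ht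
    obtain ⟨i, _, hti⟩ := ht
    rw [hH₀U]
    exact Set.mem_iUnion.mpr ⟨i, hti⟩
  have hFmem : ∀ t ∈ A₃, ∃ n, t ∈ F n := by
    intro t ht
    rw [hF₀U] at ht
    obtain ⟨i, hti⟩ := Set.mem_iUnion.mp ht
    refine ⟨i, ?_⟩
    simp only [hF_def, Set.mem_iUnion, Finset.mem_range]
    exact ⟨i, by omega, hti⟩
  have hHmem : ∀ t ∈ A₄, ∃ n, t ∈ H n := by
    intro t ht
    rw [hH₀U] at ht
    obtain ⟨i, hti⟩ := Set.mem_iUnion.mp ht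
    refine ⟨i, ?_⟩
    simp only [hH_def, Set.mem_iUnion, Finset.mem_range]
    exact ⟨i, by omega, hti⟩
  have hFc : ∀ n, @IsClosed ℝ sorgenfreyLeftTop (F n) := by
    intro n
    exact @isClosed_biUnion_finset ℝ ℕ sorgenfreyLeftTop (Finset.range (n+1)) F₀
      fun i _ => hF₀c i
  have hHc : ∀ n, @IsClosed ℝ sorgenfreyTop (H n) := by
    intro n
    exact @isClosed_biUnion_finset ℝ ℕ sorgenfreyTop (Finset.range (n+1)) H₀
      fun i _ => hH₀c i
  -- choice of avoidance radii
  have hex : ∀ (n : ℕ) (t : ℝ), ∃ a : ℝ, ∃ b : ℝ, 0 < a ∧ 0 < b ∧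
      (t ∉ A₃ → Set.Ioc (t - a) t ∩ F n = ∅) ∧ (t ∉ A₄ → Set.Ico t (t + b) ∩ H n = ∅) := by
    intro n t
    have hA : ∃ a : ℝ, 0 < a ∧ (t ∉ A₃ → Set.Ioc (t - a) t ∩ F n = ∅) := by
      by_cases h3 : t ∈ A₃
      · exact ⟨1, one_pos, fun h => absurd h3 h⟩
      · have htF : t ∈ (F n)ᶜ := fun h => h3 (hFsub n h)
        have hopen : TopologicalSpace.GenerateOpen {S : Set ℝ | ∃ a b : ℝ, S = Set.Ioc a b}
            (F n)ᶜ := (hFc n).isOpen_compl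
        obtain ⟨δ, hδ, hsub⟩ := HQM4.sorgL hopen t htF
        refine ⟨δ, hδ, fun _ => ?_⟩
        rw [Set.eq_empty_iff_forall_notMem]
        exact fun s hs => (hsub hs.1) hs.2
    have hB : ∃ b : ℝ, 0 < b ∧ (t ∉ A₄ → Set.Ico t (t + b) ∩ H n = ∅) := by
      by_cases h4 : t ∈ A₄
      · exact ⟨1, one_pos, fun h => absurd h4 h⟩
      · have htH : t ∈ (H n)ᶜ := fun h => h4 (hHsub n h)
        have hopen : TopologicalSpace.GenerateOpen {S : Set ℝ | ∃ a b : ℝ, S = Set.Ico a b}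
            (H n)ᶜ := (hHc n).isOpen_compl
        obtain ⟨δ, hδ, hsub⟩ := HQM4.sorgR hopen t htH
        refine ⟨δ, hδ, fun _ => ?_⟩
        rw [Set.eq_empty_iff_forall_notMem]
        exact fun s hs => (hsub hs.1) hs.2
    obtain ⟨a, ha, hA'⟩ := hA
    obtain ⟨b, hb, hB'⟩ := hB
    exact ⟨a, b, ha, hb, hA', hB'⟩
  choose l r hlpos hrpos hlav hrav using hex
  -- the quasi-metric
  refine ⟨HQM4.rho (HQM4.Vn A₂ A₃ A₄ l r), ⟨⟨fun x y => HQM4.rho_nonneg, ?_, ?_⟩,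
    fun x y z => HQM4.rho_na x y z⟩, ?_⟩
  · -- vanishing exactly on the diagonal
    intro x y
    constructor
    · intro h0
      by_contra hne
      have hd : 0 < |y - x| := by
        rw [abs_pos, sub_ne_zero]
        exact fun hc => hne hc.symm
      obtain ⟨m, hm⟩ := HQM4.exists_pow_half_lt hd
      have hy : y ∉ HQM4.Reach (HQM4.Vn A₂ A₃ A₄ l r m) x := by
        intro hy
        have h1 := HQM4.reach_small hy
        rw [Set.mem_Ioo] at h1
        have : |y - x| < (2⁻¹:ℝ) ^ m := abs_lt.mpr ⟨by linarith [h1.1], by linarith [h1.2]⟩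
        linarith
      have hne0 : HQM4.rho (HQM4.Vn A₂ A₃ A₄ l r) x y ≠ 0 := by
        unfold HQM4.rho
        rw [dif_pos ⟨m, hy⟩]
        positivity
      exact hne0 h0
    · rintro rfl
      exact HQM4.rho_self
  · -- triangle inequality
    intro x y z
    exact le_trans (HQM4.rho_na x y z)
      (max_le (le_add_of_nonneg_right HQM4.rho_nonneg) (le_add_of_nonneg_left HQM4.rho_nonneg))
  · -- the topology
    have hballR : ∀ (x : ℝ) (m : ℕ),
        {z : ℝ | HQM4.rho (HQM4.Vn A₂ A₃ A₄ l r) x z < (2⁻¹:ℝ) ^ m} ⊆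
          HQM4.Reach (HQM4.Vn A₂ A₃ A₄ l r m) x :=
      fun x m z hz => (HQM4.rho_lt_iff.mp hz) m le_rfl
    have hballx : ∀ (x : ℝ) (m : ℕ),
        x ∈ {z : ℝ | HQM4.rho (HQM4.Vn A₂ A₃ A₄ l r) x z < (2⁻¹:ℝ) ^ m} := by
      intro x m
      simp only [Set.mem_setOf_eq, HQM4.rho_self]
      positivity
    apply le_antisymm
    · -- hybrid ≤ quasi-metric topology: every ball is hybrid-open
      apply le_generateFrom
      rintro B ⟨x₀, rr, hrr, rfl⟩
      refine HQM4.isOpen_generateFrom_of_nbhd ?_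
      intro y hy
      rw [Set.mem_setOf_eq] at hy
      obtain ⟨m, hm⟩ := HQM4.exists_pow_half_lt hrr
      have hTsub : {z : ℝ | HQM4.rho (HQM4.Vn A₂ A₃ A₄ l r) y z < (2⁻¹:ℝ) ^ m} ⊆
          {z : ℝ | HQM4.rho (HQM4.Vn A₂ A₃ A₄ l r) x₀ z < rr} := by
        intro z hz
        rw [Set.mem_setOf_eq] at hz ⊢
        exact lt_of_le_of_lt (HQM4.rho_na x₀ z y) (max_lt hy (hz.trans hm))
      rcases hmem y with hy1 | hy2 | hy3 | hy4
      · have hy2' : y ∉ A₂ := fun h => (Set.disjoint_left.mp h12) hy1 h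
        have hy3' : y ∉ A₃ := fun h => (Set.disjoint_left.mp h13) hy1 h
        have hy4' : y ∉ A₄ := fun h => (Set.disjoint_left.mp h14) hy1 h
        have hVs : ∀ k : ℕ, ∃ ε > 0, Set.Ioo (y - ε) (y + ε) ⊆ HQM4.Vn A₂ A₃ A₄ l r k y :=
          fun k => HQM4.V_sup_A1 hy2' hy3' hy4' (hlpos k y) (hrpos k y)
        choose εf hεf hεsub using hVs
        obtain ⟨ε, hε, hle⟩ := HQM4.exists_min_eps εf hεf m
        refine ⟨Set.Ioo (y - ε) (y + ε), Or.inl (Or.inl (Or.inl ⟨y, hy1, ε, hε, rfl⟩)),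
          ⟨by linarith, by linarith⟩, ?_⟩
        refine Set.Subset.trans ?_ hTsub
        intro t ht
        rw [Set.mem_setOf_eq, HQM4.rho_lt_iff]
        intro k hk
        refine HQM4.reach_closed HQM4.mem_reach_self (hεsub k ?_)
        exact Set.Ioo_subset_Ioo (by linarith [hle k hk]) (by linarith [hle k hk]) ht
      · refine ⟨{y}, Or.inl (Or.inl (Or.inr ⟨y, hy2, rfl⟩)), rfl, ?_⟩
        refine Set.Subset.trans ?_ hTsub
        intro t ht
        rw [Set.mem_singleton_iff] at ht
        subst ht
        rw [Set.mem_setOf_eq, HQM4.rho_self]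
        positivity
      · have hy2' : y ∉ A₂ := fun h => (Set.disjoint_left.mp h23) h hy3
        have hVs : ∀ k : ℕ, ∃ ε > 0, Set.Ico y (y + ε) ⊆ HQM4.Vn A₂ A₃ A₄ l r k y :=
          fun k => HQM4.V_sup_A3 hy2' hy3 (hrpos k y)
        choose εf hεf hεsub using hVs
        obtain ⟨ε, hε, hle⟩ := HQM4.exists_min_eps εf hεf m
        refine ⟨Set.Ico y (y + ε), Or.inl (Or.inr ⟨y, hy3, ε, hε, rfl⟩),
          ⟨le_refl y, by linarith⟩, ?_⟩
        refine Set.Subset.trans ?_ hTsub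
        intro t ht
        rw [Set.mem_setOf_eq, HQM4.rho_lt_iff]
        intro k hk
        refine HQM4.reach_closed HQM4.mem_reach_self (hεsub k ?_)
        exact Set.Ico_subset_Ico_right (by linarith [hle k hk]) ht
      · have hy2' : y ∉ A₂ := fun h => (Set.disjoint_left.mp h24) h hy4
        have hy3' : y ∉ A₃ := h43' y hy4
        have hVs : ∀ k : ℕ, ∃ ε > 0, Set.Ioc (y - ε) y ⊆ HQM4.Vn A₂ A₃ A₄ l r k y :=
          fun k => HQM4.V_sup_A4 hy2' hy3' hy4 (hlpos k y)
        choose εf hεf hεsub using hVs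
        obtain ⟨ε, hε, hle⟩ := HQM4.exists_min_eps εf hεf m
        refine ⟨Set.Ioc (y - ε) y, Or.inr ⟨y, hy4, ε, hε, rfl⟩,
          ⟨by linarith, le_refl y⟩, ?_⟩
        refine Set.Subset.trans ?_ hTsub
        intro t ht
        rw [Set.mem_setOf_eq, HQM4.rho_lt_iff]
        intro k hk
        refine HQM4.reach_closed HQM4.mem_reach_self (hεsub k ?_)
        exact Set.Ioc_subset_Ioc_left (by linarith [hle k hk]) ht
    · -- quasi-metric ≤ hybrid: every hybrid generator is quasi-metric-open
      apply le_generateFrom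
      rintro S hS
      refine HQM4.isOpen_generateFrom_of_nbhd ?_
      intro x hx
      rcases hS with ((hS1 | hS2) | hS3) | hS4
      · obtain ⟨w, hw1, ε, hε, rfl⟩ := hS1
        rw [Set.mem_Ioo] at hx
        have hδ : 0 < min (x - (w - ε)) (w + ε - x) := lt_min (by linarith [hx.1]) (by linarith [hx.2])
        obtain ⟨m, hm⟩ := HQM4.exists_pow_half_lt hδ
        refine ⟨{z : ℝ | HQM4.rho (HQM4.Vn A₂ A₃ A₄ l r) x z < (2⁻¹:ℝ) ^ m},
          ⟨x, (2⁻¹:ℝ) ^ m, by positivity, rfl⟩, hballx x m, ?_⟩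
        refine (hballR x m).trans (HQM4.reach_small.trans ?_)
        intro t ht
        rw [Set.mem_Ioo] at ht ⊢
        have h1 := min_le_left (x - (w - ε)) (w + ε - x)
        have h2 := min_le_right (x - (w - ε)) (w + ε - x)
        exact ⟨by linarith [ht.1], by linarith [ht.2]⟩
      · obtain ⟨w, hw2, rfl⟩ := hS2
        rw [Set.mem_singleton_iff] at hx
        subst hx
        refine ⟨{z : ℝ | HQM4.rho (HQM4.Vn A₂ A₃ A₄ l r) x z < (2⁻¹:ℝ) ^ 0},
          ⟨x, (2⁻¹:ℝ) ^ 0, by positivity, rfl⟩, hballx x 0, ?_⟩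
        exact (hballR x 0).trans (HQM4.reach_A2 hw2)
      · obtain ⟨w, hw3, ε, hε, rfl⟩ := hS3
        rw [Set.mem_Ico] at hx
        by_cases hxw : x = w
        · subst hxw
          obtain ⟨N, hN⟩ := hFmem x hw3
          obtain ⟨M, hM⟩ := HQM4.exists_pow_half_lt hε
          refine ⟨{z : ℝ | HQM4.rho (HQM4.Vn A₂ A₃ A₄ l r) x z < (2⁻¹:ℝ) ^ (max N M)},
            ⟨x, (2⁻¹:ℝ) ^ (max N M), by positivity, rfl⟩, hballx x _, ?_⟩
          intro t ht
          have htR := hballR x _ ht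
          have h1 : t ∈ Set.Ici x :=
            HQM4.reach_left h43' (hlav (max N M)) (hFmono (le_max_left N M) hN) htR
          have h2 := HQM4.reach_small htR
          rw [Set.mem_Ioo] at h2
          have h3 := HQM4.pow_half_anti (le_max_right N M)
          exact ⟨h1, by linarith [h2.2]⟩
        · have hwx : w < x := lt_of_le_of_ne hx.1 (Ne.symm hxw)
          have hδ : 0 < min (x - w) (w + ε - x) := lt_min (by linarith) (by linarith [hx.2])
          obtain ⟨m, hm⟩ := HQM4.exists_pow_half_lt hδ
          refine ⟨{z : ℝ | HQM4.rho (HQM4.Vn A₂ A₃ A₄ l r) x z < (2⁻¹:ℝ) ^ m},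
            ⟨x, (2⁻¹:ℝ) ^ m, by positivity, rfl⟩, hballx x m, ?_⟩
          refine (hballR x m).trans (HQM4.reach_small.trans ?_)
          intro t ht
          rw [Set.mem_Ioo] at ht
          have h1 := min_le_left (x - w) (w + ε - x)
          have h2 := min_le_right (x - w) (w + ε - x)
          exact ⟨by linarith [ht.1], by linarith [ht.2]⟩
      · obtain ⟨w, hw4, ε, hε, rfl⟩ := hS4
        rw [Set.mem_Ioc] at hx
        by_cases hxw : x = w
        · subst hxw
          obtain ⟨N, hN⟩ := hHmem x hw4
          obtain ⟨M, hM⟩ := HQM4.exists_pow_half_lt hε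
          refine ⟨{z : ℝ | HQM4.rho (HQM4.Vn A₂ A₃ A₄ l r) x z < (2⁻¹:ℝ) ^ (max N M)},
            ⟨x, (2⁻¹:ℝ) ^ (max N M), by positivity, rfl⟩, hballx x _, ?_⟩
          intro t ht
          have htR := hballR x _ ht
          have h1 : t ∈ Set.Iic x :=
            HQM4.reach_right h34' (hrav (max N M)) (hHmono (le_max_left N M) hN) htR
          have h2 := HQM4.reach_small htR
          rw [Set.mem_Ioo] at h2
          have h3 := HQM4.pow_half_anti (le_max_right N M)
          exact ⟨by linarith [h2.1], h1⟩
        · have hwx : x < w := lt_of_le_of_ne hx.2 hxw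
          have hδ : 0 < min (x - (w - ε)) (w - x) := lt_min (by linarith [hx.1]) (by linarith)
          obtain ⟨m, hm⟩ := HQM4.exists_pow_half_lt hδ
          refine ⟨{z : ℝ | HQM4.rho (HQM4.Vn A₂ A₃ A₄ l r) x z < (2⁻¹:ℝ) ^ m},
            ⟨x, (2⁻¹:ℝ) ^ m, by positivity, rfl⟩, hballx x m, ?_⟩
          refine (hballR x m).trans (HQM4.reach_small.trans ?_)
          intro t ht
          rw [Set.mem_Ioo] at ht
          have h1 := min_le_left (x - (w - ε)) (w - x)
          have h2 := min_le_right (x - (w - ε)) (w - x)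
          exact ⟨by linarith [ht.1], by linarith [ht.2]⟩
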